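/- In a weight-balanced B-tree with branching parameter a > 4 and leaf parameter k > 0 (leaves all at equal depth with weight between k and 2k−1; every internal node at height h has weight at most 2a^h·k; every internal node except the root has weight at least (1/2)a^h·k), every internal node other than the root has between a/4 and 4a children. -/
import Mathlib


/-- In a weight-balanced B-tree with branching parameter `a > 4` and leaf
parameter `k > 0`, every internal node other than the root has between `a/4` and `4a`
children.  A non-root internal node at height `h ≥ 1` is modeled by the list `ws` of the
weights of its children (each child at height `h-1` satisfies the weight invariants:
at least `(1/2)·a^(h-1)·k` — this also covers leaves, whose weight is in `[k, 2k-1]` —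
and at most `2·a^(h-1)·k`), and the node's own weight `ws.sum` lies between
`(1/2)·a^h·k` and `2·a^h·k`. -/
theorem wbbt_children_bound
    (a k : ℝ) (ha : 4 < a) (hk : 0 < k)
    (h : ℕ) (hh : 1 ≤ h)
    (ws : List ℝ)
    (hlo : ∀ w ∈ ws, (1/2) * a^(h-1) * k ≤ w)
    (hhi : ∀ w ∈ ws, w ≤ 2 * a^(h-1) * k)
    (hWlo : (1/2) * a^h * k ≤ ws.sum)
    (hWhi : ws.sum ≤ 2 * a^h * k) :
    a / 4 ≤ (ws.length : ℝ) ∧ (ws.length : ℝ) ≤ 4 * a := by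
  have ha0 : (0:ℝ) < a := by linarith
  have hc : (0:ℝ) < a^(h-1) * k := mul_pos (pow_pos ha0 _) hk
  have hpow : a^h = a^(h-1) * a := by
    rw [← pow_succ, Nat.sub_add_cancel hh]
  have h1 : ws.sum ≤ (ws.length : ℝ) * (2 * a^(h-1) * k) := by
    simpa using List.sum_le_card_nsmul ws _ hhi
  have h2 : (ws.length : ℝ) * ((1/2) * a^(h-1) * k) ≤ ws.sum := by
    simpa using List.card_nsmul_le_sum ws _ hlo
  rw [hpow] at hWlo hWhi
  constructor
  · nlinarith
  · nlinarith
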